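/- Let (𝒮, 𝒮') be an optimal C_∧-correspondence, i.e. 𝒮 ∉ {∅, 𝒫}, 𝒮' ∉ {∅, 𝒫'}, and φ(𝒮, 𝒮') ≤ φ(𝒯, 𝒯') for every 𝒯 ⊆ 𝒫 with 𝒯 ∉ {∅, 𝒫} and every 𝒯' ⊆ 𝒫' with 𝒯' ∉ {∅, 𝒫'}. If (𝒮, 𝒮') is not mutual, then |𝒮| ∈ {1, |𝒫| − 1} or |𝒮'| ∈ {1, |𝒫'| − 1}. -/
import Mathlib

open Finset symmDiff

variable {V : Type*}

/-- `𝒜` is a partition of the finite set `V`: parts are nonempty, pairwise disjoint,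
and their union is all of `V`. -/
def IsPartition [DecidableEq V] [Fintype V] (𝒜 : Finset (Finset V)) : Prop :=
  (∀ P ∈ 𝒜, P.Nonempty) ∧
  (∀ P ∈ 𝒜, ∀ Q ∈ 𝒜, P ≠ Q → Disjoint P Q) ∧
  𝒜.biUnion id = Finset.univ

/-- `φ(𝒮, 𝒮') = |U_𝒮 △ U_𝒮'|`. -/
def phi [DecidableEq V] (𝒮 𝒮' : Finset (Finset V)) : ℕ :=
  ((𝒮.biUnion id) ∆ (𝒮'.biUnion id)).card

/-- A correspondence `(𝒮, 𝒮')` with `𝒮 ⊆ 𝒫`, `𝒮' ⊆ 𝒫'` is mutual if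
(1) `|P ∩ U_{𝒮'}| ≥ |P|/2` for all `P ∈ 𝒮`,
(2) `|P ∩ U_{𝒮'}| ≤ |P|/2` for all `P ∈ 𝒫 \ 𝒮`,
(3) `|P' ∩ U_𝒮| ≥ |P'|/2` for all `P' ∈ 𝒮'`,
(4) `|P' ∩ U_𝒮| ≤ |P'|/2` for all `P' ∈ 𝒫' \ 𝒮'`
(here `𝒜` plays the role of `𝒫` and `ℬ` the role of `𝒫'`). -/
def Mutual [DecidableEq V] (𝒜 ℬ 𝒮 𝒮' : Finset (Finset V)) : Prop :=
  (∀ P ∈ 𝒮, (P.card : ℚ) / 2 ≤ ((P ∩ 𝒮'.biUnion id).card : ℚ)) ∧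
  (∀ P ∈ 𝒜 \ 𝒮, ((P ∩ 𝒮'.biUnion id).card : ℚ) ≤ (P.card : ℚ) / 2) ∧
  (∀ P' ∈ 𝒮', (P'.card : ℚ) / 2 ≤ ((P' ∩ 𝒮.biUnion id).card : ℚ)) ∧
  (∀ P' ∈ ℬ \ 𝒮', ((P' ∩ 𝒮.biUnion id).card : ℚ) ≤ (P'.card : ℚ) / 2)


lemma key1 [DecidableEq V] (A B P : Finset V) (h : P ⊆ A) :
    ((A \ P) ∆ B).card + (P \ B).card = (A ∆ B).card + (P ∩ B).card := by
  have d1 : Disjoint ((A \ P) ∆ B) (P \ B) := by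
    simp only [Finset.disjoint_left, Finset.mem_symmDiff, mem_sdiff]
    tauto
  have d2 : Disjoint (A ∆ B) (P ∩ B) := by
    simp only [Finset.disjoint_left, Finset.mem_symmDiff, mem_inter]
    tauto
  rw [← card_union_of_disjoint d1, ← card_union_of_disjoint d2]
  congr 1
  ext x
  have hx := @h x
  simp only [mem_union, Finset.mem_symmDiff, mem_sdiff, mem_inter]
  tauto

lemma phi_comm' [DecidableEq V] (𝒮 𝒮' : Finset (Finset V)) : phi 𝒮 𝒮' = phi 𝒮' 𝒮 := by
  unfold phi; rw [symmDiff_comm]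

lemma biUnion_erase_eq' [DecidableEq V] {𝒜 𝒮 : Finset (Finset V)} {P : Finset V}
    (hdisj : ∀ P ∈ 𝒜, ∀ Q ∈ 𝒜, P ≠ Q → Disjoint P Q)
    (hS : 𝒮 ⊆ 𝒜) (hP : P ∈ 𝒮) :
    (𝒮.erase P).biUnion id = 𝒮.biUnion id \ P := by
  ext x
  simp only [mem_biUnion, id, mem_sdiff, mem_erase]
  constructor
  · rintro ⟨Q, ⟨hQP, hQS⟩, hx⟩
    exact ⟨⟨Q, hQS, hx⟩, fun hxP =>
      (Finset.disjoint_left.mp (hdisj Q (hS hQS) P (hS hP) hQP) hx) hxP⟩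
  · rintro ⟨⟨Q, hQS, hx⟩, hxP⟩
    refine ⟨Q, ⟨?_, hQS⟩, hx⟩
    rintro rfl; exact hxP hx

/-- If removing `P` is strictly better, optimality forces `𝒮 = {P}`. -/
lemma shrink_case [DecidableEq V] {𝒜 𝒮 𝒮' : Finset (Finset V)} {P : Finset V}
    (hdisj : ∀ P ∈ 𝒜, ∀ Q ∈ 𝒜, P ≠ Q → Disjoint P Q)
    (hS : 𝒮 ⊆ 𝒜) (hnP : 𝒮 ≠ 𝒜) (hP : P ∈ 𝒮)
    (hlt : (P ∩ 𝒮'.biUnion id).card < (P \ 𝒮'.biUnion id).card)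
    (hopt : ∀ 𝒯 ⊆ 𝒜, 𝒯 ≠ ∅ → 𝒯 ≠ 𝒜 → phi 𝒮 𝒮' ≤ phi 𝒯 𝒮') :
    𝒮.card = 1 := by
  by_cases hTne : 𝒮.erase P = ∅
  · have hsing : 𝒮 = {P} := by
      ext x
      simp only [mem_singleton]
      constructor
      · intro hx
        by_contra hxP
        exact absurd (mem_erase.mpr ⟨hxP, hx⟩) (by simp [hTne])
      · rintro rfl; exact hP
    rw [hsing, card_singleton]
  · exfalso
    have hT𝒜 : 𝒮.erase P ≠ 𝒜 := by
      intro h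
      exact hnP (subset_antisymm hS (h ▸ erase_subset P 𝒮))
    have hle := hopt (𝒮.erase P) ((erase_subset P 𝒮).trans hS) hTne hT𝒜
    have hsub : P ⊆ 𝒮.biUnion id := Finset.subset_biUnion_of_mem id hP
    have hkey := key1 (𝒮.biUnion id) (𝒮'.biUnion id) P hsub
    have hU : (𝒮.erase P).biUnion id = 𝒮.biUnion id \ P :=
      biUnion_erase_eq' hdisj hS hP
    have h1 : phi (𝒮.erase P) 𝒮' = ((𝒮.biUnion id \ P) ∆ (𝒮'.biUnion id)).card := by
      unfold phi; rw [hU]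
    have h2 : phi 𝒮 𝒮' = ((𝒮.biUnion id) ∆ (𝒮'.biUnion id)).card := rfl
    omega

/-- If adding `P` is strictly better, optimality forces `insert P 𝒮 = 𝒜`. -/
lemma grow_case [DecidableEq V] {𝒜 𝒮 𝒮' : Finset (Finset V)} {P : Finset V}
    (hdisj : ∀ P ∈ 𝒜, ∀ Q ∈ 𝒜, P ≠ Q → Disjoint P Q)
    (hS : 𝒮 ⊆ 𝒜) (hne : 𝒮 ≠ ∅) (hP𝒜 : P ∈ 𝒜) (hPS : P ∉ 𝒮)
    (hlt : (P \ 𝒮'.biUnion id).card < (P ∩ 𝒮'.biUnion id).card)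
    (hopt : ∀ 𝒯 ⊆ 𝒜, 𝒯 ≠ ∅ → 𝒯 ≠ 𝒜 → phi 𝒮 𝒮' ≤ phi 𝒯 𝒮') :
    𝒮.card = 𝒜.card - 1 := by
  have hdisjP : Disjoint P (𝒮.biUnion id) := by
    rw [Finset.disjoint_biUnion_right]
    intro Q hQ
    exact hdisj P hP𝒜 Q (hS hQ) (fun h => hPS (h ▸ hQ))
  have hT𝒜 : insert P 𝒮 = 𝒜 := by
    by_contra hT
    have hTsub : insert P 𝒮 ⊆ 𝒜 := insert_subset hP𝒜 hS
    have hTne : insert P 𝒮 ≠ ∅ := (insert_nonempty P 𝒮).ne_empty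
    have hle := hopt (insert P 𝒮) hTsub hTne hT
    have hU : (insert P 𝒮).biUnion id = 𝒮.biUnion id ∪ P := by
      rw [biUnion_insert]; exact union_comm _ _
    have hsub : P ⊆ (insert P 𝒮).biUnion id :=
      Finset.subset_biUnion_of_mem id (mem_insert_self P 𝒮)
    have hdel : (insert P 𝒮).biUnion id \ P = 𝒮.biUnion id := by
      rw [hU]
      exact union_sdiff_cancel_right hdisjP.symm
    have hkey := key1 ((insert P 𝒮).biUnion id) (𝒮'.biUnion id) P hsub
    rw [hdel] at hkey
    have h1 : phi (insert P 𝒮) 𝒮' = ((insert P 𝒮).biUnion id ∆ (𝒮'.biUnion id)).card := rfl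
    have h2 : phi 𝒮 𝒮' = ((𝒮.biUnion id) ∆ (𝒮'.biUnion id)).card := rfl
    omega
  have : 𝒜.card = 𝒮.card + 1 := by
    rw [← hT𝒜, card_insert_of_notMem hPS]
  omega

lemma rat_lt_to_nat {P B : Finset V} [DecidableEq V]
    (h : ((P ∩ B).card : ℚ) < (P.card : ℚ) / 2) :
    (P ∩ B).card < (P \ B).card := by
  have hsum : (P ∩ B).card + (P \ B).card = P.card :=
    Finset.card_inter_add_card_sdiff P B
  have h2 : 2 * ((P ∩ B).card : ℚ) < (P.card : ℚ) := by linarith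
  have h3 : 2 * (P ∩ B).card < P.card := by exact_mod_cast h2
  omega

lemma rat_gt_to_nat {P B : Finset V} [DecidableEq V]
    (h : (P.card : ℚ) / 2 < ((P ∩ B).card : ℚ)) :
    (P \ B).card < (P ∩ B).card := by
  have hsum : (P ∩ B).card + (P \ B).card = P.card :=
    Finset.card_inter_add_card_sdiff P B
  have h2 : (P.card : ℚ) < 2 * ((P ∩ B).card : ℚ) := by linarith
  have h3 : P.card < 2 * (P ∩ B).card := by exact_mod_cast h2
  omega

/-- if `(𝒮, 𝒮')` is an optimal `C_∧`-correspondence (i.e.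
`𝒮 ∉ {∅, 𝒫}`, `𝒮' ∉ {∅, 𝒫'}`, and `φ(𝒮, 𝒮') ≤ φ(𝒯, 𝒯')` for all `𝒯 ⊆ 𝒫` with
`𝒯 ∉ {∅, 𝒫}` and all `𝒯' ⊆ 𝒫'` with `𝒯' ∉ {∅, 𝒫'}`) which is not mutual, then
`|𝒮| ∈ {1, |𝒫| − 1}` or `|𝒮'| ∈ {1, |𝒫'| − 1}`
(here `𝒜` plays the role of `𝒫` and `ℬ` the role of `𝒫'`). -/
theorem stmt18 [DecidableEq V] [Fintype V] (𝒜 ℬ : Finset (Finset V))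
    (hA : IsPartition 𝒜) (hB : IsPartition ℬ)
    (𝒮 𝒮' : Finset (Finset V)) (hS : 𝒮 ⊆ 𝒜) (hS' : 𝒮' ⊆ ℬ)
    (hne : 𝒮 ≠ ∅) (hnP : 𝒮 ≠ 𝒜) (hne' : 𝒮' ≠ ∅) (hnP' : 𝒮' ≠ ℬ)
    (hopt : ∀ 𝒯 ⊆ 𝒜, 𝒯 ≠ ∅ → 𝒯 ≠ 𝒜 →
      ∀ 𝒯' ⊆ ℬ, 𝒯' ≠ ∅ → 𝒯' ≠ ℬ → phi 𝒮 𝒮' ≤ phi 𝒯 𝒯')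
    (hnm : ¬ Mutual 𝒜 ℬ 𝒮 𝒮') :
    (𝒮.card = 1 ∨ 𝒮.card = 𝒜.card - 1) ∨
    (𝒮'.card = 1 ∨ 𝒮'.card = ℬ.card - 1) := by
  obtain ⟨-, hdA, -⟩ := hA
  obtain ⟨-, hdB, -⟩ := hB
  have hopt1 : ∀ 𝒯 ⊆ 𝒜, 𝒯 ≠ ∅ → 𝒯 ≠ 𝒜 → phi 𝒮 𝒮' ≤ phi 𝒯 𝒮' :=
    fun 𝒯 h h1 h2 => hopt 𝒯 h h1 h2 𝒮' hS' hne' hnP'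
  have hopt2 : ∀ 𝒯' ⊆ ℬ, 𝒯' ≠ ∅ → 𝒯' ≠ ℬ → phi 𝒮' 𝒮 ≤ phi 𝒯' 𝒮 := by
    intro 𝒯' h h1 h2
    rw [phi_comm' 𝒮' 𝒮, phi_comm' 𝒯' 𝒮]
    exact hopt 𝒮 hS hne hnP 𝒯' h h1 h2
  rw [Mutual] at hnm
  simp only [not_and_or, not_forall, not_le, mem_sdiff] at hnm
  rcases hnm with (⟨P, hP, hlt⟩ | ⟨P, ⟨hP𝒜, hPS⟩, hlt⟩ | ⟨P, hP, hlt⟩ | ⟨P, ⟨hPℬ, hPS'⟩, hlt⟩)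
  · exact Or.inl (Or.inl (shrink_case hdA hS hnP hP (rat_lt_to_nat hlt) hopt1))
  · exact Or.inl (Or.inr (grow_case hdA hS hne hP𝒜 hPS (rat_gt_to_nat hlt) hopt1))
  · exact Or.inr (Or.inl (shrink_case hdB hS' hnP' hP (rat_lt_to_nat hlt) hopt2))
  · exact Or.inr (Or.inr (grow_case hdB hS' hne' hPℬ hPS' (rat_gt_to_nat hlt) hopt2))
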